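/- Let τ be a Cartan involution of a finite-dimensional real Lie algebra g with Cartan decomposition g = m ⊕ h, and let p be a nonzero h-submodule of m. Let p⊥ be the orthogonal complement of p in m with respect to the inner product ⟨u,v⟩ = −κ(u,τ(v)). Then [p, p⊥] = {0}, and consequently [m, p] = [p, p]. -/

import Mathlib

/-- For a Cartan involution τ with decomposition g = m ⊕ h and a nonzero
h-submodule p of m, the bracket of p with its orthogonal complement in m (w.r.t.
⟨u,v⟩ = −κ(u,τv)) vanishes, and consequently [m,p] = [p,p]. -/
theorem stmt_13 (g : Type*) [LieRing g] [LieAlgebra ℝ g] [FiniteDimensional ℝ g]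
    (τ : g →ₗ[ℝ] g)
    (hbr : ∀ x y : g, τ ⁅x, y⁆ = ⁅τ x, τ y⁆)
    (hinvol : ∀ x : g, τ (τ x) = x)
    (hpos : ∀ x : g, x ≠ 0 → 0 < -(killingForm ℝ g x (τ x)))
    (p : Submodule ℝ g)
    (hpm : ∀ x ∈ p, τ x = -x)
    (hstab : ∀ a : g, τ a = a → ∀ x ∈ p, ⁅a, x⁆ ∈ p)
    (hpne : p ≠ ⊥) :
    (∀ u ∈ p, ∀ v : g, τ v = -v → (∀ x ∈ p, killingForm ℝ g x (τ v) = 0) →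
      ⁅u, v⁆ = 0) ∧
    Submodule.span ℝ {y : g | ∃ u : g, τ u = -u ∧ ∃ w ∈ p, y = ⁅u, w⁆} =
      Submodule.span ℝ {y : g | ∃ u ∈ p, ∃ w ∈ p, y = ⁅u, w⁆} := by
  -- Killing form invariance under the automorphism τ
  have κτ : ∀ x y : g, killingForm ℝ g (τ x) (τ y) = killingForm ℝ g x y := by
    let e : g ≃ₗ⁅ℝ⁆ g :=
      { LinearEquiv.ofInvolutive τ hinvol with map_lie' := fun {x y} => hbr x y }
    intro x y
    exact LieAlgebra.killingForm_of_equiv_apply e x y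
  have κsymm : ∀ x y : g, killingForm ℝ g x y = killingForm ℝ g y x :=
    fun x y => LieModule.traceForm_comm ℝ g g x y
  -- Part 1
  have part1 : ∀ u ∈ p, ∀ v : g, τ v = -v →
      (∀ x ∈ p, killingForm ℝ g x (τ v) = 0) → ⁅u, v⁆ = 0 := by
    intro u hu v hτv horth
    by_contra hne
    have hτh : τ ⁅u, v⁆ = ⁅u, v⁆ := by
      rw [hbr, hpm u hu, hτv]; simp
    have hpos' := hpos _ hne
    rw [hτh] at hpos'
    have hzero : killingForm ℝ g ⁅u, v⁆ ⁅u, v⁆ = 0 := by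
      have hinv := LieModule.traceForm_apply_lie_apply ℝ g g ⁅u, v⁆ u v
      -- hinv : κ ⁅⁅u,v⁆,u⁆ v = κ ⁅u,v⁆ ⁅u,v⁆
      have hmem : ⁅⁅u, v⁆, u⁆ ∈ p := hstab _ hτh u hu
      have hv : killingForm ℝ g ⁅⁅u, v⁆, u⁆ v = 0 := by
        have := horth _ hmem
        rw [hτv] at this
        simpa using this
      rw [hv] at hinv
      exact hinv.symm
    rw [hzero] at hpos'
    simp at hpos'
  refine ⟨part1, ?_⟩
  -- Part 2
  -- The positive definite form B x y = -κ(x, τ y)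
  set B : LinearMap.BilinForm ℝ g := -((killingForm ℝ g).compl₂ τ) with hB
  have hBapp : ∀ x y : g, B x y = -(killingForm ℝ g x (τ y)) := fun x y => rfl
  have hBsymm : ∀ x y : g, B x y = B y x := by
    intro x y
    rw [hBapp, hBapp]
    congr 1
    calc killingForm ℝ g x (τ y) = killingForm ℝ g (τ x) (τ (τ y)) := (κτ x (τ y)).symm
      _ = killingForm ℝ g (τ x) y := by rw [hinvol]
      _ = killingForm ℝ g y (τ x) := κsymm _ _
  have hBrefl : B.IsRefl := fun x y h => by rw [hBsymm]; exact h
  have hBnd : (B.restrict p).Nondegenerate := by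
    refine LinearMap.BilinForm.Nondegenerate.ofSeparatingLeft ?_
    intro ⟨x, hx⟩ hxall
    have h1 : -(killingForm ℝ g x (τ x)) = 0 := hxall ⟨x, hx⟩
    by_contra hne
    have hxne : x ≠ 0 := fun h => hne (Subtype.ext h)
    have h2 := hpos x hxne
    rw [h1] at h2
    exact lt_irrefl 0 h2
  have hcompl : IsCompl p (B.orthogonal p) :=
    LinearMap.BilinForm.isCompl_orthogonal_of_restrict_nondegenerate hBrefl hBnd
  apply le_antisymm
  · rw [Submodule.span_le]
    rintro y ⟨u, hτu, w, hw, rfl⟩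
    -- decompose u = u₁ + u₂
    have hmem : u ∈ p ⊔ B.orthogonal p := by rw [hcompl.sup_eq_top]; trivial
    obtain ⟨u₁, hu₁, u₂, hu₂, rfl⟩ := Submodule.mem_sup.mp hmem
    have hτu₂ : τ u₂ = -u₂ := by
      have h : τ u₁ + τ u₂ = -u₁ + -u₂ := by rw [← map_add, hτu, neg_add]
      rw [hpm u₁ hu₁] at h
      exact add_left_cancel h
    have horth : ∀ x ∈ p, killingForm ℝ g x (τ u₂) = 0 := by
      intro x hx
      have := hu₂ x hx
      rw [hBapp] at this
      linarith
    have hz : ⁅w, u₂⁆ = 0 := part1 w hw u₂ hτu₂ horth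
    have hz' : ⁅u₂, w⁆ = 0 := by rw [← lie_skew, hz, neg_zero]
    have heq : ⁅u₁ + u₂, w⁆ = ⁅u₁, w⁆ := by rw [add_lie, hz', add_zero]
    rw [heq]
    exact Submodule.subset_span ⟨u₁, hu₁, w, hw, rfl⟩
  · apply Submodule.span_mono
    rintro y ⟨u, hu, w, hw, rfl⟩
    exact ⟨u, hpm u hu, w, hw, rfl⟩
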